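/- There exists a constant C > 0 such that for every real n ≥ 2 and all reals a, b, ε, δ with 0 ≤ b ≤ a ≤ n, ε ∈ [−1,1], δ ∈ [−1,1], a + ε ≥ 0 and 0 ≤ b + δ ≤ a + ε, one has |a·H(b/a) − (a+ε)·H((b+δ)/(a+ε))| ≤ C·ln(n), where a term of the form x·H(y/x) is interpreted as 0 when x = 0. -/

import Mathlib

/-- Entropy function `H(p) = −p·ln p − (1−p)·ln(1−p)` (with `0·ln 0 = 0`). -/
noncomputable def entropy (p : ℝ) : ℝ :=
  -p * Real.log p - (1 - p) * Real.log (1 - p)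

lemma mul_log_ge_sub_one (x : ℝ) (hx : 0 ≤ x) : x - 1 ≤ x * Real.log x := by
  rcases eq_or_lt_of_le hx with rfl | hx'
  · simp
  · have h := Real.one_sub_inv_le_log_of_pos hx'
    have h2 := mul_le_mul_of_nonneg_left h hx
    have hinv : x * (1 - x⁻¹) = x - 1 := by field_simp
    linarith [hinv ▸ h2]

lemma entropy_repr (a b : ℝ) (hb : 0 ≤ b) (hba : b ≤ a) :
    a * entropy (b / a) =
      a * Real.log a - b * Real.log b - (a - b) * Real.log (a - b) := by
  rcases eq_or_lt_of_le (hb.trans hba) with h0 | ha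
  · have hb0 : b = 0 := le_antisymm (h0 ▸ hba) hb
    simp [entropy, ← h0, hb0]
  have h1 : (1 : ℝ) - b / a = (a - b) / a := by field_simp
  have hb' : b * Real.log (b / a) = b * Real.log b - b * Real.log a := by
    rcases eq_or_lt_of_le hb with rfl | hbpos
    · simp
    · rw [Real.log_div hbpos.ne' ha.ne']; ring
  have hab' : (a - b) * Real.log ((a - b) / a) =
      (a - b) * Real.log (a - b) - (a - b) * Real.log a := by
    rcases eq_or_lt_of_le hba with rfl | h
    · simp
    · rw [Real.log_div (by linarith) ha.ne']; ring
  have key : a * entropy (b / a) =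
      -(b * Real.log (b / a)) - (a - b) * Real.log ((a - b) / a) := by
    unfold entropy
    rw [h1]
    field_simp
  rw [key, hb', hab']; ring

lemma gdiff (n s t : ℝ) (hn : 2 ≤ n) (hs : 0 ≤ s) (hst : s ≤ t)
    (ht : t ≤ n + 1) (hd : t - s ≤ 2) :
    |t * Real.log t - s * Real.log s| ≤ 11 * Real.log n := by
  have hln2 : (0.6931471803 : ℝ) < Real.log 2 := Real.log_two_gt_d9
  have hlnn : Real.log 2 ≤ Real.log n := Real.log_le_log (by norm_num) hn
  rcases le_or_gt 1 s with h1 | h1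
  · have hs0 : (0 : ℝ) < s := by linarith
    have ht0 : (0 : ℝ) < t := by linarith
    have hlt : 0 ≤ Real.log t := Real.log_nonneg (h1.trans hst)
    have hls : 0 ≤ Real.log s := Real.log_nonneg h1
    have mono : s * Real.log s ≤ t * Real.log t :=
      mul_le_mul hst (Real.log_le_log hs0 hst) hls (by linarith)
    have hdivlog : Real.log (t / s) = Real.log t - Real.log s :=
      Real.log_div ht0.ne' hs0.ne'
    have hsub : Real.log (t / s) ≤ t / s - 1 :=
      Real.log_le_sub_one_of_pos (by positivity)
    have h2 : s * (Real.log t - Real.log s) ≤ t - s := by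
      rw [← hdivlog]
      have h3 := mul_le_mul_of_nonneg_left hsub hs0.le
      have heq : s * (t / s - 1) = t - s := by field_simp
      linarith [heq ▸ h3]
    have upper : t * Real.log t - s * Real.log s ≤ (t - s) * (Real.log t + 1) := by
      nlinarith
    have hltn : Real.log t ≤ Real.log n + 1 := by
      have h3 : Real.log t ≤ Real.log (n + 1) := Real.log_le_log ht0 ht
      have h4 : n + 1 ≤ Real.exp 1 * n := by nlinarith [Real.exp_one_gt_d9]
      have h5 : Real.log (n + 1) ≤ Real.log (Real.exp 1 * n) :=
        Real.log_le_log (by linarith) h4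
      have h6 : Real.log (Real.exp 1 * n) = 1 + Real.log n := by
        rw [Real.log_mul (Real.exp_ne_zero 1) (by linarith), Real.log_exp]
      linarith
    rw [abs_of_nonneg (by linarith)]
    nlinarith
  · have ht3 : t ≤ 3 := by linarith
    have hgs_lo : s - 1 ≤ s * Real.log s := mul_log_ge_sub_one s hs
    have hgs_hi : s * Real.log s ≤ 0 :=
      mul_nonpos_of_nonneg_of_nonpos hs (Real.log_nonpos hs h1.le)
    have hgt_lo : t - 1 ≤ t * Real.log t := mul_log_ge_sub_one t (hs.trans hst)
    have hgt_hi : t * Real.log t ≤ 6 := by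
      rcases le_or_gt t 1 with h | h
      · have := mul_nonpos_of_nonneg_of_nonpos (hs.trans hst) (Real.log_nonpos (hs.trans hst) h)
        linarith
      · have hlog : Real.log t ≤ t - 1 := Real.log_le_sub_one_of_pos (by linarith)
        have hlog0 : 0 ≤ Real.log t := Real.log_nonneg h.le
        nlinarith
    rw [abs_le]
    constructor <;> nlinarith

lemma gdiff' (n s t : ℝ) (hn : 2 ≤ n) (hs : 0 ≤ s) (ht0 : 0 ≤ t)
    (hsn : s ≤ n + 1) (htn : t ≤ n + 1) (hd : |t - s| ≤ 2) :
    |t * Real.log t - s * Real.log s| ≤ 11 * Real.log n := by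
  rcases le_total s t with h | h
  · exact gdiff n s t hn hs h htn (by rw [abs_of_nonneg (by linarith)] at hd; linarith)
  · rw [abs_sub_comm]
    exact gdiff n t s hn ht0 h hsn (by rw [abs_of_nonpos (by linarith)] at hd; linarith)

theorem stmt11 :
    ∃ C : ℝ, 0 < C ∧ ∀ n a b ε δ : ℝ, 2 ≤ n →
      0 ≤ b → b ≤ a → a ≤ n →
      ε ∈ Set.Icc (-1 : ℝ) 1 → δ ∈ Set.Icc (-1 : ℝ) 1 →
      0 ≤ a + ε → 0 ≤ b + δ → b + δ ≤ a + ε →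
      |a * entropy (b / a) - (a + ε) * entropy ((b + δ) / (a + ε))| ≤
        C * Real.log n := by
  refine ⟨40, by norm_num, ?_⟩
  intro n a b ε δ hn hb hba han hε hδ ha' hb' hba'
  obtain ⟨hε1, hε2⟩ := hε
  obtain ⟨hδ1, hδ2⟩ := hδ
  have hlogn : 0 < Real.log n := Real.log_pos (by linarith)
  rw [entropy_repr a b hb hba, entropy_repr (a + ε) (b + δ) hb' hba']
  have h1 : |(a + ε) * Real.log (a + ε) - a * Real.log a| ≤ 11 * Real.log n :=
    gdiff' n a (a + ε) hn (hb.trans hba) ha' (by linarith) (by linarith)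
      (by rw [abs_le]; constructor <;> linarith)
  have h2 : |(b + δ) * Real.log (b + δ) - b * Real.log b| ≤ 11 * Real.log n :=
    gdiff' n b (b + δ) hn hb hb' (by linarith) (by linarith)
      (by rw [abs_le]; constructor <;> linarith)
  have h3 : |(a + ε - (b + δ)) * Real.log (a + ε - (b + δ)) -
      (a - b) * Real.log (a - b)| ≤ 11 * Real.log n :=
    gdiff' n (a - b) (a + ε - (b + δ)) hn (by linarith) (by linarith)
      (by linarith) (by linarith)
      (by rw [abs_le]; constructor <;> linarith)
  calc |a * Real.log a - b * Real.log b - (a - b) * Real.log (a - b) -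
        ((a + ε) * Real.log (a + ε) - (b + δ) * Real.log (b + δ) -
          (a + ε - (b + δ)) * Real.log (a + ε - (b + δ)))|
      ≤ |(a + ε) * Real.log (a + ε) - a * Real.log a| +
        |(b + δ) * Real.log (b + δ) - b * Real.log b| +
        |(a + ε - (b + δ)) * Real.log (a + ε - (b + δ)) -
          (a - b) * Real.log (a - b)| := by
        have t1 := abs_sub (a * Real.log a) (b * Real.log b)
        rw [abs_le]
        constructor <;>
          [ (have u1 := neg_abs_le ((a + ε) * Real.log (a + ε) - a * Real.log a);
             have u2 := neg_abs_le ((b + δ) * Real.log (b + δ) - b * Real.log b);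
             have u3 := neg_abs_le ((a + ε - (b + δ)) * Real.log (a + ε - (b + δ)) -
               (a - b) * Real.log (a - b));
             have v1 := le_abs_self ((a + ε) * Real.log (a + ε) - a * Real.log a);
             have v2 := le_abs_self ((b + δ) * Real.log (b + δ) - b * Real.log b);
             have v3 := le_abs_self ((a + ε - (b + δ)) * Real.log (a + ε - (b + δ)) -
               (a - b) * Real.log (a - b));
             linarith);
            (have u1 := neg_abs_le ((a + ε) * Real.log (a + ε) - a * Real.log a);
             have u2 := neg_abs_le ((b + δ) * Real.log (b + δ) - b * Real.log b);
             have u3 := neg_abs_le ((a + ε - (b + δ)) * Real.log (a + ε - (b + δ)) -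
               (a - b) * Real.log (a - b));
             have v1 := le_abs_self ((a + ε) * Real.log (a + ε) - a * Real.log a);
             have v2 := le_abs_self ((b + δ) * Real.log (b + δ) - b * Real.log b);
             have v3 := le_abs_self ((a + ε - (b + δ)) * Real.log (a + ε - (b + δ)) -
               (a - b) * Real.log (a - b));
             linarith)]
    _ ≤ 11 * Real.log n + 11 * Real.log n + 11 * Real.log n := by linarith
    _ ≤ 40 * Real.log n := by linarith
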